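/- For all δ, r with 0 < δ ≤ r ≤ 1/4, one has (π²/96)·(r² − δ²) ≤ λ((𝒱 \ ℋ) ∩ {(x,y) : δ ≤ y ≤ r}) ≤ (r² − δ²)/2. -/

import Mathlib

open MeasureTheory

/-- The hyperbolic area measure on the upper half-plane: density `1/y²` w.r.t. Lebesgue. -/
noncomputable def hypMeasure : Measure (ℝ × ℝ) :=
  volume.withDensity (fun p => ENNReal.ofReal (1 / p.2 ^ 2))

/-- The set ℋ = {(x,y) : y > 0, |x| < 1/2, y ≥ (2/π)·tan(π|x|)}. -/
def Hset : Set (ℝ × ℝ) :=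
  {p | 0 < p.2 ∧ |p.1| < 1 / 2 ∧ (2 / Real.pi) * Real.tan (Real.pi * |p.1|) ≤ p.2}

/-- The set 𝒱 = {(x,y) : y > 0, 2|x| ≤ y ≤ 1/2}. -/
def Vset : Set (ℝ × ℝ) :=
  {p | 0 < p.2 ∧ 2 * |p.1| ≤ p.2 ∧ p.2 ≤ 1 / 2}

noncomputable def aaux (y : ℝ) : ℝ := Real.arctan (Real.pi * y / 2) / Real.pi

lemma measurable_tan' : Measurable Real.tan := by
  have : Real.tan = fun x => Real.sin x / Real.cos x :=
    funext fun x => Real.tan_eq_sin_div_cos x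
  rw [this]
  exact Real.measurable_sin.div Real.measurable_cos

lemma measurableSet_Hset : MeasurableSet Hset := by
  have : Hset = {p : ℝ × ℝ | 0 < p.2} ∩ ({p : ℝ × ℝ | |p.1| < 1 / 2} ∩
      {p : ℝ × ℝ | (2 / Real.pi) * Real.tan (Real.pi * |p.1|) ≤ p.2}) := rfl
  rw [this]
  exact (measurableSet_lt measurable_const measurable_snd).inter
    ((measurableSet_lt measurable_fst.abs measurable_const).inter
      (measurableSet_le ((measurable_tan'.comp
        (measurable_fst.abs.const_mul Real.pi)).const_mul (2 / Real.pi)) measurable_snd))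

lemma measurableSet_Vset : MeasurableSet Vset := by
  have : Vset = {p : ℝ × ℝ | 0 < p.2} ∩ ({p : ℝ × ℝ | 2 * |p.1| ≤ p.2} ∩
      {p : ℝ × ℝ | p.2 ≤ 1 / 2}) := rfl
  rw [this]
  exact (measurableSet_lt measurable_const measurable_snd).inter
    ((measurableSet_le (measurable_fst.abs.const_mul 2) measurable_snd).inter
      (measurableSet_le measurable_snd measurable_const))

lemma arctan_nonneg' {t : ℝ} (h : 0 ≤ t) : 0 ≤ Real.arctan t := by
  have := Real.arctan_strictMono.monotone h
  simpa using this

lemma arctan_le_aux {t : ℝ} (h0 : 0 ≤ t) (h1 : t ≤ 1) :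
    Real.arctan t ≤ t - t ^ 3 / 12 := by
  have hderiv : ∀ s : ℝ, HasDerivAt (fun s : ℝ => s - s ^ 3 / 12 - Real.arctan s)
      (1 - 3 * s ^ 2 / 12 - 1 / (1 + s ^ 2)) s := by
    intro s
    have h1 := ((hasDerivAt_id s).sub ((hasDerivAt_pow 3 s).div_const 12)).sub
      (Real.hasDerivAt_arctan s)
    exact h1.congr_deriv (by norm_num)
  have H : MonotoneOn (fun s : ℝ => s - s ^ 3 / 12 - Real.arctan s) (Set.Icc 0 1) := by
    apply monotoneOn_of_deriv_nonneg (convex_Icc 0 1)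
    · exact fun s _ => ((hderiv s).continuousAt).continuousWithinAt
    · exact fun s _ => ((hderiv s).differentiableAt).differentiableWithinAt
    · intro s hs
      rw [interior_Icc] at hs
      rw [(hderiv s).deriv]
      have h2 : (0:ℝ) < 1 + s ^ 2 := by positivity
      have h3 : 1 / (1 + s ^ 2) ≤ 1 - 3 * s ^ 2 / 12 := by
        rw [div_le_iff₀ h2]
        have hs2 : s ^ 2 ≤ 1 := by nlinarith [hs.1.le, hs.2.le]
        nlinarith [sq_nonneg s, mul_nonneg (sq_nonneg s) (by linarith : (0:ℝ) ≤ 3 - s ^ 2)]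
      linarith
  have key := H (Set.left_mem_Icc.mpr (by norm_num)) (Set.mem_Icc.mpr ⟨h0, h1⟩) h0
  simp only [Real.arctan_zero] at key
  norm_num at key
  linarith

lemma arctan_ge_aux {t : ℝ} (h0 : 0 ≤ t) :
    t - t ^ 3 / 3 ≤ Real.arctan t := by
  have hderiv : ∀ s : ℝ, HasDerivAt (fun s : ℝ => Real.arctan s - s + s ^ 3 / 3)
      (1 / (1 + s ^ 2) - 1 + 3 * s ^ 2 / 3) s := by
    intro s
    have h1 := ((Real.hasDerivAt_arctan s).sub (hasDerivAt_id s)).add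
      ((hasDerivAt_pow 3 s).div_const 3)
    exact h1.congr_deriv (by norm_num)
  have H : MonotoneOn (fun s : ℝ => Real.arctan s - s + s ^ 3 / 3) (Set.Icc 0 t) := by
    apply monotoneOn_of_deriv_nonneg (convex_Icc 0 t)
    · exact fun s _ => ((hderiv s).continuousAt).continuousWithinAt
    · exact fun s _ => ((hderiv s).differentiableAt).differentiableWithinAt
    · intro s hs
      rw [(hderiv s).deriv]
      have h2 : (0:ℝ) < 1 + s ^ 2 := by positivity
      have h3 : 1 - s ^ 2 ≤ 1 / (1 + s ^ 2) := by
        rw [le_div_iff₀ h2]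
        nlinarith [sq_nonneg s, sq_nonneg (s^2)]
      nlinarith [sq_nonneg s]
  have key := H (Set.left_mem_Icc.mpr h0) (Set.mem_Icc.mpr ⟨h0, le_refl t⟩) h0
  simp only [Real.arctan_zero] at key
  norm_num at key
  linarith

lemma memS_iff {δ r : ℝ} (h1 : 0 < δ) (h2 : δ ≤ r) (h3 : r ≤ 1 / 4) (x y : ℝ) :
    (x, y) ∈ (Vset \ Hset) ∩ {p : ℝ × ℝ | δ ≤ p.2 ∧ p.2 ≤ r} ↔
      (δ ≤ y ∧ y ≤ r) ∧ (aaux y < |x| ∧ |x| ≤ y / 2) := by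
  have hπ : (0:ℝ) < Real.pi := Real.pi_pos
  simp only [Vset, Hset, Set.mem_inter_iff, Set.mem_diff, Set.mem_setOf_eq, aaux]
  constructor
  · rintro ⟨⟨⟨hy0, hx2, hy12⟩, hH⟩, hδ, hr⟩
    push_neg at hH
    have hxhalf : |x| < 1 / 2 := by linarith
    have htan : y < 2 / Real.pi * Real.tan (Real.pi * |x|) := hH hy0 hxhalf
    have hx' : Real.pi * |x| < Real.pi / 2 := by nlinarith
    have hxneg : -(Real.pi / 2) < Real.pi * |x| := by
      have : 0 ≤ Real.pi * |x| := by positivity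
      linarith
    rw [div_mul_eq_mul_div, lt_div_iff₀ hπ] at htan
    have h5 : Real.pi * y / 2 < Real.tan (Real.pi * |x|) := by linarith
    have h6 := Real.arctan_strictMono h5
    rw [Real.arctan_tan hxneg hx'] at h6
    refine ⟨⟨hδ, hr⟩, ?_, by linarith⟩
    rw [div_lt_iff₀ hπ]
    have := mul_comm |x| Real.pi
    linarith
  · rintro ⟨⟨hδ, hr⟩, ha, hb⟩
    have hy0 : 0 < y := lt_of_lt_of_le h1 hδ
    refine ⟨⟨⟨hy0, by linarith, by linarith⟩, ?_⟩, hδ, hr⟩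
    rintro ⟨-, -, hle⟩
    have h6 : Real.arctan (Real.pi * y / 2) < Real.pi * |x| := by
      rw [div_lt_iff₀ hπ] at ha
      have := mul_comm |x| Real.pi
      linarith
    have hx' : Real.pi * |x| < Real.pi / 2 := by
      have hxhalf : |x| < 1 / 2 := by
        have := abs_nonneg x
        linarith
      nlinarith
    have h7 := Real.tan_lt_tan_of_nonneg_of_lt_pi_div_two
      (arctan_nonneg' (by positivity)) hx' h6
    rw [Real.tan_arctan] at h7
    rw [div_mul_eq_mul_div, div_le_iff₀ hπ] at hle
    have := mul_comm y Real.pi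
    nlinarith

lemma sec_eq {δ r : ℝ} (h1 : 0 < δ) (h2 : δ ≤ r) (h3 : r ≤ 1 / 4) {y : ℝ}
    (hy : y ∈ Set.Icc δ r) :
    {x : ℝ | (x, y) ∈ (Vset \ Hset) ∩ {p : ℝ × ℝ | δ ≤ p.2 ∧ p.2 ≤ r}} =
      Set.Ico (-(y / 2)) (-(aaux y)) ∪ Set.Ioc (aaux y) (y / 2) := by
  have hy0 : 0 < y := lt_of_lt_of_le h1 hy.1
  have ha0 : 0 ≤ aaux y :=
    div_nonneg (arctan_nonneg' (by positivity)) Real.pi_pos.le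
  ext x
  rw [Set.mem_setOf_eq, memS_iff h1 h2 h3]
  simp only [Set.mem_union, Set.mem_Ico, Set.mem_Ioc]
  constructor
  · rintro ⟨-, ha, hb⟩
    rcases le_or_gt 0 x with hx | hx
    · right
      rw [abs_of_nonneg hx] at ha hb
      exact ⟨ha, hb⟩
    · left
      rw [abs_of_neg hx] at ha hb
      constructor <;> linarith
  · rintro (⟨ha, hb⟩ | ⟨ha, hb⟩)
    · have hxneg : x < 0 := by linarith
      rw [abs_of_neg hxneg]
      exact ⟨⟨hy.1, hy.2⟩, by linarith, by linarith⟩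
    · have hx0 : 0 < x := lt_of_le_of_lt ha0 ha
      rw [abs_of_pos hx0]
      exact ⟨⟨hy.1, hy.2⟩, ha, hb⟩

lemma aaux_bounds {δ r : ℝ} (h1 : 0 < δ) (h2 : δ ≤ r) (h3 : r ≤ 1 / 4) {y : ℝ}
    (hy : y ∈ Set.Icc δ r) :
    Real.pi ^ 2 * y ^ 3 / 48 ≤ y - 2 * aaux y ∧ y - 2 * aaux y ≤ y ^ 3 := by
  have hπ : (0:ℝ) < Real.pi := Real.pi_pos
  have hy0 : 0 < y := lt_of_lt_of_le h1 hy.1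
  have hy4 : y ≤ 1 / 4 := le_trans hy.2 h3
  set t := Real.pi * y / 2 with ht
  have ht0 : 0 ≤ t := by positivity
  have ht1 : t ≤ 1 := by
    have := Real.pi_lt_four
    rw [ht]
    nlinarith
  have hA1 : Real.arctan t ≤ t - t ^ 3 / 12 := arctan_le_aux ht0 ht1
  have hA2 : t - t ^ 3 / 3 ≤ Real.arctan t := arctan_ge_aux ht0
  have he : y - 2 * aaux y = (Real.pi * y - 2 * Real.arctan t) / Real.pi := by
    unfold aaux
    rw [← ht]
    field_simp
  have ht3 : t ^ 3 = Real.pi ^ 3 * y ^ 3 / 8 := by rw [ht]; ring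
  have hπ2 : Real.pi ^ 2 < 12 := by nlinarith [Real.pi_lt_d2, hπ]
  constructor
  · rw [he, le_div_iff₀ hπ]
    nlinarith [hA1]
  · rw [he, div_le_iff₀ hπ]
    have hcube : 0 ≤ y ^ 3 := by positivity
    nlinarith [hA2, mul_nonneg hcube (sub_nonneg.mpr hπ2.le)]

lemma lint_linear (c : ℝ) {δ r : ℝ} (hc : 0 ≤ c) (h1 : 0 < δ) (h2 : δ ≤ r) :
    ∫⁻ y in Set.Icc δ r, ENNReal.ofReal (c * y) =
      ENNReal.ofReal (c * (r ^ 2 - δ ^ 2) / 2) := by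
  rw [← ofReal_integral_eq_lintegral_ofReal]
  · congr 1
    rw [MeasureTheory.integral_Icc_eq_integral_Ioc, ← intervalIntegral.integral_of_le h2,
      intervalIntegral.integral_const_mul, integral_id]
    ring
  · exact (continuous_const.mul continuous_id).integrableOn_Icc
  · filter_upwards [ae_restrict_mem measurableSet_Icc] with y hy
    exact mul_nonneg hc (le_trans h1.le hy.1)

theorem stmt2 (δ r : ℝ) (h1 : 0 < δ) (h2 : δ ≤ r) (h3 : r ≤ 1 / 4) :
    ENNReal.ofReal (Real.pi ^ 2 / 96 * (r ^ 2 - δ ^ 2)) ≤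
        hypMeasure ((Vset \ Hset) ∩ {p | δ ≤ p.2 ∧ p.2 ≤ r}) ∧
      hypMeasure ((Vset \ Hset) ∩ {p | δ ≤ p.2 ∧ p.2 ≤ r}) ≤
        ENNReal.ofReal ((r ^ 2 - δ ^ 2) / 2) := by
  have hπ : (0:ℝ) < Real.pi := Real.pi_pos
  set S := (Vset \ Hset) ∩ {p : ℝ × ℝ | δ ≤ p.2 ∧ p.2 ≤ r} with hSdef
  have hS : MeasurableSet S := by
    refine (measurableSet_Vset.diff measurableSet_Hset).inter ?_
    have : {p : ℝ × ℝ | δ ≤ p.2 ∧ p.2 ≤ r} =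
        {p : ℝ × ℝ | δ ≤ p.2} ∩ {p : ℝ × ℝ | p.2 ≤ r} := rfl
    rw [this]
    exact (measurableSet_le measurable_const measurable_snd).inter
      (measurableSet_le measurable_snd measurable_const)
  have hfm : Measurable (S.indicator (fun p : ℝ × ℝ => ENNReal.ofReal (1 / p.2 ^ 2))) :=
    (Measurable.ennreal_ofReal (measurable_const.div (measurable_snd.pow measurable_const))).indicator hS
  have key : hypMeasure S =
      ∫⁻ y in Set.Icc δ r, ENNReal.ofReal ((y - 2 * aaux y) / y ^ 2) := by
    rw [hypMeasure, withDensity_apply _ hS, ← lintegral_indicator hS, Measure.volume_eq_prod,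
      lintegral_prod_symm _ hfm.aemeasurable]
    rw [← lintegral_indicator (measurableSet_Icc : MeasurableSet (Set.Icc δ r))]
    apply lintegral_congr
    intro y
    by_cases hy : y ∈ Set.Icc δ r
    · rw [Set.indicator_of_mem hy]
      have hy0 : 0 < y := lt_of_lt_of_le h1 hy.1
      have hsec : (fun x : ℝ => S.indicator (fun p : ℝ × ℝ => ENNReal.ofReal (1 / p.2 ^ 2)) (x, y)) =
          (Set.Ico (-(y / 2)) (-(aaux y)) ∪ Set.Ioc (aaux y) (y / 2)).indicator
            (fun _ : ℝ => ENNReal.ofReal (1 / y ^ 2)) := by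
        funext x
        by_cases hx : (x, y) ∈ S
        · rw [Set.indicator_of_mem hx]
          have hx' : x ∈ Set.Ico (-(y / 2)) (-(aaux y)) ∪ Set.Ioc (aaux y) (y / 2) := by
            rw [← sec_eq h1 h2 h3 hy]
            exact hx
          rw [Set.indicator_of_mem hx']
        · rw [Set.indicator_of_notMem hx]
          have hx' : x ∉ Set.Ico (-(y / 2)) (-(aaux y)) ∪ Set.Ioc (aaux y) (y / 2) := by
            rw [← sec_eq h1 h2 h3 hy]
            exact hx
          rw [Set.indicator_of_notMem hx']
      rw [hsec, lintegral_indicator (measurableSet_Ico.union measurableSet_Ioc),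
        setLIntegral_const]
      have ha0 : 0 ≤ aaux y :=
        div_nonneg (arctan_nonneg' (by positivity)) Real.pi_pos.le
      have haley : aaux y ≤ y / 2 := by
        have hb := (aaux_bounds h1 h2 h3 hy).1
        have hc : 0 ≤ Real.pi ^ 2 * y ^ 3 :=
          mul_nonneg (sq_nonneg _) (pow_pos hy0 3).le
        linarith
      have hdisj : Disjoint (Set.Ico (-(y / 2)) (-(aaux y))) (Set.Ioc (aaux y) (y / 2)) := by
        apply Set.disjoint_left.mpr
        intro x hx1 hx2
        simp only [Set.mem_Ico, Set.mem_Ioc] at hx1 hx2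
        linarith [hx1.2, hx2.1]
      rw [measure_union hdisj measurableSet_Ioc, Real.volume_Ico, Real.volume_Ioc]
      have hrw : -(aaux y) - -(y / 2) = y / 2 - aaux y := by ring
      rw [hrw, ← ENNReal.ofReal_add (by linarith) (by linarith),
        ← ENNReal.ofReal_mul (by positivity)]
      congr 1
      field_simp
      ring
    · rw [Set.indicator_of_notMem hy]
      have : (fun x : ℝ => S.indicator (fun p : ℝ × ℝ => ENNReal.ofReal (1 / p.2 ^ 2)) (x, y)) =
          fun _ : ℝ => 0 := by
        funext x
        apply Set.indicator_of_notMem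
        intro hx
        exact hy ⟨((memS_iff h1 h2 h3 x y).mp hx).1.1, ((memS_iff h1 h2 h3 x y).mp hx).1.2⟩
      rw [this, lintegral_const, zero_mul]
  have hbnd : ∀ y ∈ Set.Icc δ r,
      Real.pi ^ 2 / 48 * y ≤ (y - 2 * aaux y) / y ^ 2 ∧ (y - 2 * aaux y) / y ^ 2 ≤ 1 * y := by
    intro y hy
    have hy0 : 0 < y := lt_of_lt_of_le h1 hy.1
    have hy2 : (0:ℝ) < y ^ 2 := by positivity
    obtain ⟨hb1, hb2⟩ := aaux_bounds h1 h2 h3 hy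
    constructor
    · rw [le_div_iff₀ hy2]
      nlinarith
    · rw [div_le_iff₀ hy2]
      nlinarith
  constructor
  · calc ENNReal.ofReal (Real.pi ^ 2 / 96 * (r ^ 2 - δ ^ 2))
        = ∫⁻ y in Set.Icc δ r, ENNReal.ofReal (Real.pi ^ 2 / 48 * y) := by
          rw [lint_linear (Real.pi ^ 2 / 48) (by positivity) h1 h2]
          congr 1
          ring
      _ ≤ ∫⁻ y in Set.Icc δ r, ENNReal.ofReal ((y - 2 * aaux y) / y ^ 2) := by
          apply setLIntegral_mono' measurableSet_Icc
          intro y hy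
          exact ENNReal.ofReal_le_ofReal (hbnd y hy).1
      _ = hypMeasure S := key.symm
  · calc hypMeasure S
        = ∫⁻ y in Set.Icc δ r, ENNReal.ofReal ((y - 2 * aaux y) / y ^ 2) := key
      _ ≤ ∫⁻ y in Set.Icc δ r, ENNReal.ofReal (1 * y) := by
          apply setLIntegral_mono' measurableSet_Icc
          intro y hy
          exact ENNReal.ofReal_le_ofReal (hbnd y hy).2
      _ = ENNReal.ofReal ((r ^ 2 - δ ^ 2) / 2) := by
          rw [lint_linear 1 (by norm_num) h1 h2]
          congr 1
          ring
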